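/- Let q be a prime. Work in the quaternion algebra H over the field ZMod q, with basis 1, i, j, k satisfying i² = j² = k² = −1, i·j = k = −j·i. Let A, B, C, D, z ∈ ZMod q satisfy (A·D − B·C)·z² + (A² + B² − C² − D²)·z + (B·C − A·D) = 0, with A + D·z ≠ 0 and 1 + z² ≠ 0. Then there exist x, y ∈ ZMod q and a unit λ ∈ ZMod q such that λ·(A + B·i + C·j + D·k) = (1 + x·i)·(1 + y·j)·(1 + z·k). -/

import Mathlib

open scoped Quaternion

/-- If `z ∈ ZMod q` satisfies the quadratic equation
`(AD − BC)z² + (A² + B² − C² − D²)z + (BC − AD) = 0` with `A + Dz ≠ 0` and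
`1 + z² ≠ 0`, then `A + Bi + Cj + Dk` is, up to a unit scalar, a product
`(1 + xi)(1 + yj)(1 + zk)` in the Hamilton quaternions over `ZMod q`. -/
theorem quaternion_decomposition_sufficient
    (q : ℕ) (hq : q.Prime) (A B C D z : ZMod q)
    (hquad : (A * D - B * C) * z ^ 2 + (A ^ 2 + B ^ 2 - C ^ 2 - D ^ 2) * z
      + (B * C - A * D) = 0)
    (hAD : A + D * z ≠ 0) (hz : 1 + z ^ 2 ≠ 0) :
    ∃ (x y lam : ZMod q), IsUnit lam ∧
      lam • (⟨A, B, C, D⟩ : ℍ[ZMod q]) =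
        (⟨1, x, 0, 0⟩ : ℍ[ZMod q]) * (⟨1, 0, y, 0⟩ : ℍ[ZMod q]) * (⟨1, 0, 0, z⟩ : ℍ[ZMod q]) := by
  haveI : Fact q.Prime := ⟨hq⟩
  refine ⟨(B - z * C) / (A + D * z), (C + z * B) / (A + D * z),
    (1 + z ^ 2) / (A + D * z), isUnit_iff_ne_zero.2 (div_ne_zero hz hAD), ?_⟩
  ext
  · show (1 + z ^ 2) / (A + D * z) * A = _
    simp only [QuaternionAlgebra.re_mul, QuaternionAlgebra.imI_mul, QuaternionAlgebra.imJ_mul, QuaternionAlgebra.imK_mul, mul_zero, zero_mul, add_zero, zero_add, sub_zero, mul_one, one_mul]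
    have h2 : A + z * D ≠ 0 := by rwa [mul_comm z D]
    field_simp
    linear_combination z * hquad
  · show (1 + z ^ 2) / (A + D * z) * B = _
    simp only [QuaternionAlgebra.re_mul, QuaternionAlgebra.imI_mul, QuaternionAlgebra.imJ_mul, QuaternionAlgebra.imK_mul]
    field_simp
    ring
  · show (1 + z ^ 2) / (A + D * z) * C = _
    simp only [QuaternionAlgebra.re_mul, QuaternionAlgebra.imI_mul, QuaternionAlgebra.imJ_mul, QuaternionAlgebra.imK_mul]
    field_simp
    ring
  · show (1 + z ^ 2) / (A + D * z) * D = _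
    simp only [QuaternionAlgebra.re_mul, QuaternionAlgebra.imI_mul, QuaternionAlgebra.imJ_mul, QuaternionAlgebra.imK_mul, mul_zero, zero_mul, add_zero, zero_add, sub_zero, mul_one, one_mul]
    have h2 : A + z * D ≠ 0 := by rwa [mul_comm z D]
    field_simp
    linear_combination (-1) * hquad
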